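/- Let X be a 2-based Banach space with constants c, C whose natural parameterization r : ℝ → S_X is continuously differentiable, let L be the half-length of S_X, and let φ : ℝ → ℝ be the phase shift, i.e. for each s, φ(s) is the unique number in (s, s + 2L) with r'(s) = r(φ(s)). For s ∈ ℝ let P(s), T(s) be the unique real numbers with r'(φ(s)) = −P(s)·r(s) + T(s)·r'(s). Then for every s ∈ ℝ: |T(s)| ≤ ((C + c)·C/c²)·|P(s)| and |P(s)| ≥ c²/(C² + C·c + c²). -/

import Mathlib

noncomputable section
open MeasureTheory Set Filter
open scoped ENNReal Topology

variable {X : Type*} [NormedAddCommGroup X] [NormedSpace ℝ X]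

/-- `e^{it} = cos t • e₁ + sin t • e₂` for the basis `b 0, b 1`. -/
def expV (b : Module.Basis (Fin 2) ℝ X) (t : ℝ) : X :=
  Real.cos t • b 0 + Real.sin t • b 1

/-- The polar parameterization `p(t) = e^{it}/‖e^{it}‖` of the unit sphere. -/
def polarParam (b : Module.Basis (Fin 2) ℝ X) (t : ℝ) : X :=
  ‖expV b t‖⁻¹ • expV b t

/-- The Euclidean norm `|x| = √(e₁*(x)² + e₂*(x)²)` associated to the basis. -/
def euclNorm (b : Module.Basis (Fin 2) ℝ X) (x : X) : ℝ :=
  Real.sqrt ((b.coord 0 x)^2 + (b.coord 1 x)^2)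

/-- `c = min{‖x‖ : |x| = 1}`. -/
def cConst (b : Module.Basis (Fin 2) ℝ X) : ℝ :=
  sInf (norm '' {x : X | euclNorm b x = 1})

/-- `C = max{‖x‖ : |x| = 1}`. -/
def CConst (b : Module.Basis (Fin 2) ℝ X) : ℝ :=
  sSup (norm '' {x : X | euclNorm b x = 1})

/-- The right derivative of a function `f : ℝ → X`. -/
def rightDeriv (f : ℝ → X) (t : ℝ) : X := derivWithin f (Ici t) t

/-- The left derivative of a function `f : ℝ → X`. -/
def leftDeriv (f : ℝ → X) (t : ℝ) : X := derivWithin f (Iic t) t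

/-- The arc-length function `s(t) = ∫₀^t ‖p'₊(u)‖ du`. -/
def arcLen (b : Module.Basis (Fin 2) ℝ X) (t : ℝ) : ℝ :=
  ∫ u in (0:ℝ)..t, ‖rightDeriv (polarParam b) u‖

/-- The half-length `L = s(π)` of the unit sphere. -/
def halfLen (b : Module.Basis (Fin 2) ℝ X) : ℝ := arcLen b Real.pi

/-- The inverse `t = s⁻¹` of the arc-length function. -/
def arcInv (b : Module.Basis (Fin 2) ℝ X) : ℝ → ℝ := Function.invFun (arcLen b)

/-- The natural parameterization `r = p ∘ t` of the unit sphere. -/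
def natParam (b : Module.Basis (Fin 2) ℝ X) : ℝ → X := polarParam b ∘ arcInv b

/-- Local absolute continuity of `f` with a.e. derivative `f'`, in the sense that `f` is
differentiable almost everywhere, `f'` is locally integrable, and `f` is recovered from `f'`
by integration. -/
def LocAC {E : Type*} [NormedAddCommGroup E] [NormedSpace ℝ E] [CompleteSpace E]
    (f f' : ℝ → E) : Prop :=
  (∀ᵐ t : ℝ, HasDerivAt f (f' t) t) ∧ LocallyIntegrable f' volume ∧
    ∀ a b : ℝ, a ≤ b → f b - f a = ∫ t in a..b, f' t

/-- `s` is a Lebesgue point of `g`. -/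
def LebesguePoint {E : Type*} [NormedAddCommGroup E] (g : ℝ → E) (s : ℝ) : Prop :=
  Tendsto (fun ε : ℝ => (1/ε) * ∫ t in (0:ℝ)..ε, ‖g (s + t) - g s‖) (𝓝[≠] (0:ℝ)) (𝓝 0)


def psiMap (b : Module.Basis (Fin 2) ℝ X) : X ≃L[ℝ] EuclideanSpace ℝ (Fin 2) :=
  haveI := Module.Finite.of_basis b
  b.equivFunL.trans (EuclideanSpace.equiv (Fin 2) ℝ).symm

lemma euclNorm_eq (b : Module.Basis (Fin 2) ℝ X) (x : X) : euclNorm b x = ‖psiMap b x‖ := by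
  rw [EuclideanSpace.norm_eq, euclNorm]
  congr 1
  rw [Fin.sum_univ_two]
  simp only [psiMap, ContinuousLinearEquiv.trans_apply, Module.Basis.coord_apply,
    Real.norm_eq_abs, sq_abs]
  have h : ∀ i, (EuclideanSpace.equiv (Fin 2) ℝ).symm (b.equivFunL x) i = b.repr x i := by
    intro i; rfl
  rw [h 0, h 1]

lemma setT_eq (b : Module.Basis (Fin 2) ℝ X) :
    {x : X | euclNorm b x = 1} = (psiMap b).symm '' Metric.sphere 0 1 := by
  ext x
  constructor
  · intro hx
    exact ⟨psiMap b x, by simpa [euclNorm_eq b x] using hx, by simp⟩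
  · rintro ⟨y, hy, rfl⟩
    simp only [mem_setOf_eq, euclNorm_eq]
    simpa using hy

lemma setT_compact (b : Module.Basis (Fin 2) ℝ X) : IsCompact {x : X | euclNorm b x = 1} := by
  rw [setT_eq]
  exact (isCompact_sphere (0 : EuclideanSpace ℝ (Fin 2)) 1).image (psiMap b).symm.continuous

lemma setT_nonempty (b : Module.Basis (Fin 2) ℝ X) : {x : X | euclNorm b x = 1}.Nonempty := by
  rw [setT_eq]
  refine ⟨(psiMap b).symm (EuclideanSpace.single (0 : Fin 2) (1:ℝ)), ⟨_, ?_, rfl⟩⟩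
  simp [EuclideanSpace.norm_single]

lemma euclNorm_zero_iff (b : Module.Basis (Fin 2) ℝ X) (x : X) : euclNorm b x = 0 ↔ x = 0 := by
  rw [euclNorm_eq, norm_eq_zero]
  exact (psiMap b).map_eq_zero_iff

lemma cConst_mem (b : Module.Basis (Fin 2) ℝ X) :
    cConst b ∈ norm '' {x : X | euclNorm b x = 1} :=
  ((setT_compact b).image continuous_norm).sInf_mem ((setT_nonempty b).image _)

lemma CConst_mem (b : Module.Basis (Fin 2) ℝ X) :
    CConst b ∈ norm '' {x : X | euclNorm b x = 1} :=
  ((setT_compact b).image continuous_norm).sSup_mem ((setT_nonempty b).image _)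

lemma cConst_pos (b : Module.Basis (Fin 2) ℝ X) : 0 < cConst b := by
  obtain ⟨x, hx, hc⟩ := cConst_mem b
  rw [← hc]
  have : x ≠ 0 := by
    intro h
    rw [mem_setOf_eq, h, (euclNorm_zero_iff b 0).mpr rfl] at hx
    norm_num at hx
  exact norm_pos_iff.mpr this

lemma cConst_le (b : Module.Basis (Fin 2) ℝ X) {x : X} (hx : euclNorm b x = 1) :
    cConst b ≤ ‖x‖ :=
  csInf_le ((setT_compact b).image continuous_norm).bddBelow ⟨x, hx, rfl⟩

lemma le_CConst (b : Module.Basis (Fin 2) ℝ X) {x : X} (hx : euclNorm b x = 1) :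
    ‖x‖ ≤ CConst b :=
  le_csSup ((setT_compact b).image continuous_norm).bddAbove ⟨x, hx, rfl⟩

lemma cConst_le_CConst (b : Module.Basis (Fin 2) ℝ X) : cConst b ≤ CConst b := by
  obtain ⟨x, hx, hc⟩ := cConst_mem b
  rw [← hc]
  exact le_trans (le_of_eq hc) ((cConst_le b hx).trans (le_CConst b hx))

lemma euclNorm_smul (b : Module.Basis (Fin 2) ℝ X) (a : ℝ) (x : X) :
    euclNorm b (a • x) = |a| * euclNorm b x := by
  rw [euclNorm_eq, euclNorm_eq, _root_.map_smul, norm_smul, Real.norm_eq_abs]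

lemma norm_bounds (b : Module.Basis (Fin 2) ℝ X) (x : X) :
    cConst b * euclNorm b x ≤ ‖x‖ ∧ ‖x‖ ≤ CConst b * euclNorm b x := by
  rcases eq_or_ne x 0 with rfl | hx
  · simp [(euclNorm_zero_iff b 0).mpr rfl]
  · have he : 0 < euclNorm b x := by
      rcases lt_or_eq_of_le (Real.sqrt_nonneg _ : (0:ℝ) ≤ euclNorm b x) with h | h
      · exact h
      · exact absurd ((euclNorm_zero_iff b x).mp h.symm) hx
    set e := euclNorm b x with hedef
    have hy : euclNorm b (e⁻¹ • x) = 1 := by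
      rw [euclNorm_smul, abs_of_pos (inv_pos.mpr he), inv_mul_cancel₀ he.ne']
    have h1 := cConst_le b hy
    have h2 := le_CConst b hy
    rw [norm_smul, Real.norm_eq_abs, abs_of_pos (inv_pos.mpr he)] at h1 h2
    constructor
    · calc cConst b * e ≤ (e⁻¹ * ‖x‖) * e := by nlinarith
        _ = ‖x‖ := by field_simp
    · calc ‖x‖ = (e⁻¹ * ‖x‖) * e := by field_simp
        _ ≤ CConst b * e := by nlinarith
def detB (b : Module.Basis (Fin 2) ℝ X) (x y : X) : ℝ :=
  b.coord 0 x * b.coord 1 y - b.coord 1 x * b.coord 0 y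

lemma euclNorm_sq (b : Module.Basis (Fin 2) ℝ X) (x : X) :
    euclNorm b x ^ 2 = (b.coord 0 x)^2 + (b.coord 1 x)^2 :=
  Real.sq_sqrt (by positivity)

lemma detB_upper (b : Module.Basis (Fin 2) ℝ X) {x y : X} (hx : ‖x‖ = 1) (hy : ‖y‖ = 1) :
    (cConst b)^2 * |detB b x y| ≤ 1 := by
  have hc := cConst_pos b
  have hex : cConst b * euclNorm b x ≤ 1 := hx ▸ (norm_bounds b x).1
  have hey : cConst b * euclNorm b y ≤ 1 := hy ▸ (norm_bounds b y).1
  have hex0 : 0 ≤ euclNorm b x := Real.sqrt_nonneg _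
  have hey0 : 0 ≤ euclNorm b y := Real.sqrt_nonneg _
  have hd2 : (detB b x y)^2 ≤ (euclNorm b x)^2 * (euclNorm b y)^2 := by
    rw [euclNorm_sq, euclNorm_sq, detB]
    nlinarith [sq_nonneg (b.coord 0 x * b.coord 0 y + b.coord 1 x * b.coord 1 y)]
  have hp : 0 ≤ cConst b * euclNorm b x := mul_nonneg hc.le hex0
  have hq : 0 ≤ cConst b * euclNorm b y := mul_nonneg hc.le hey0
  have key : ((cConst b)^2 * |detB b x y|)^2 ≤ 1 := by
    have h1 : ((cConst b)^2 * |detB b x y|)^2 = (cConst b)^4 * (detB b x y)^2 := by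
      rw [mul_pow, sq_abs]; ring
    have h2 : (cConst b)^4 * (detB b x y)^2 ≤
        (cConst b * euclNorm b x)^2 * (cConst b * euclNorm b y)^2 := by
      have h2' := mul_le_mul_of_nonneg_left hd2 (by positivity : (0:ℝ) ≤ (cConst b)^4)
      calc (cConst b)^4 * (detB b x y)^2
          ≤ (cConst b)^4 * ((euclNorm b x)^2 * (euclNorm b y)^2) := h2'
        _ = (cConst b * euclNorm b x)^2 * (cConst b * euclNorm b y)^2 := by ring
    have hp2 : (cConst b * euclNorm b x)^2 ≤ 1 := by
      nlinarith [mul_le_mul hex hex hp zero_le_one]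
    have hq2 : (cConst b * euclNorm b y)^2 ≤ 1 := by
      nlinarith [mul_le_mul hey hey hq zero_le_one]
    have h3 : (cConst b * euclNorm b x)^2 * (cConst b * euclNorm b y)^2 ≤ 1 := by
      nlinarith [mul_le_mul hp2 hq2 (sq_nonneg (cConst b * euclNorm b y)) zero_le_one]
    linarith [h1 ▸ (h2.trans h3)]
  nlinarith [sq_nonneg ((cConst b)^2 * |detB b x y| - 1), key]

lemma detB_lower (b : Module.Basis (Fin 2) ℝ X) {x u : X}
    (hcs : ∀ t : ℝ, 1 ≤ ‖x + t • u‖) (hu : ‖u‖ = 1) :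
    1 ≤ (CConst b)^2 * |detB b x u| := by
  have hc := cConst_pos b
  have hC : 0 < CConst b := lt_of_lt_of_le hc (cConst_le_CConst b)
  have hCu : 1 ≤ CConst b * euclNorm b u := hu ▸ (norm_bounds b u).2
  have heu0 : 0 ≤ euclNorm b u := Real.sqrt_nonneg _
  set x0 := b.coord 0 x; set x1 := b.coord 1 x
  set u0 := b.coord 0 u; set u1 := b.coord 1 u
  have hq1 : 1 ≤ (CConst b)^2 * (u0^2 + u1^2) := by
    have := euclNorm_sq b u
    nlinarith
  have hqpos : 0 < u0^2 + u1^2 := by nlinarith [sq_nonneg (CConst b)]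
  set ts : ℝ := -((x0*u0+x1*u1)/(u0^2+u1^2)) with hts
  have hz := hcs ts
  have hz2 : 1 ≤ CConst b * euclNorm b (x + ts • u) := le_trans hz (norm_bounds b _).2
  have hznorm : euclNorm b (x + ts • u) ^ 2 = (x0 + ts*u0)^2 + (x1 + ts*u1)^2 := by
    rw [euclNorm_sq]
    simp only [map_add, LinearMap.map_smul, smul_eq_mul]
    rfl
  have hez0 : 0 ≤ euclNorm b (x + ts • u) := Real.sqrt_nonneg _
  have hz3 : 1 ≤ (CConst b)^2 * ((x0 + ts*u0)^2 + (x1 + ts*u1)^2) := by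
    nlinarith
  have hlag : (u0^2+u1^2) * ((x0 + ts*u0)^2 + (x1 + ts*u1)^2) = (x0*u1 - x1*u0)^2 := by
    rw [hts]; field_simp; ring
  have hdet : detB b x u = x0*u1 - x1*u0 := rfl
  rw [hdet]
  have h4 : (1:ℝ) ≤ (CConst b)^4 * (x0*u1-x1*u0)^2 := by
    calc (1:ℝ) = 1*1 := by ring
      _ ≤ ((CConst b)^2 * (u0^2+u1^2)) * ((CConst b)^2 * ((x0 + ts*u0)^2 + (x1 + ts*u1)^2)) :=
          mul_le_mul hq1 hz3 zero_le_one (by positivity)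
      _ = (CConst b)^4 * ((u0^2+u1^2) * ((x0 + ts*u0)^2 + (x1 + ts*u1)^2)) := by ring
      _ = (CConst b)^4 * (x0*u1-x1*u0)^2 := by rw [hlag]
  have h5 : (1:ℝ) ≤ ((CConst b)^2 * |x0*u1-x1*u0|)^2 := by
    rw [mul_pow, sq_abs]; linarith
  by_contra hcon
  push_neg at hcon
  nlinarith [h5, mul_nonneg (sq_nonneg (CConst b)) (abs_nonneg (x0*u1 - x1*u0))]
lemma expV_ne_zero (b : Module.Basis (Fin 2) ℝ X) (t : ℝ) : expV b t ≠ 0 := by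
  intro h
  have h0 : b.coord 0 (expV b t) = Real.cos t := by
    simp [expV, Module.Basis.coord_apply, map_add, _root_.map_smul, Module.Basis.repr_self,
      Finsupp.single_apply]
  have h1 : b.coord 1 (expV b t) = Real.sin t := by
    simp [expV, Module.Basis.coord_apply, map_add, _root_.map_smul, Module.Basis.repr_self,
      Finsupp.single_apply]
  rw [h, map_zero] at h0 h1
  nlinarith [Real.sin_sq_add_cos_sq t]

lemma norm_natParam (b : Module.Basis (Fin 2) ℝ X) (u : ℝ) : ‖natParam b u‖ = 1 := by
  rw [natParam, Function.comp_apply, polarParam, norm_smul, norm_inv, norm_norm,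
    inv_mul_cancel₀ (norm_ne_zero_iff.mpr (expV_ne_zero b _))]

lemma support_line (b : Module.Basis (Fin 2) ℝ X) (hC1 : ContDiff ℝ 1 (natParam b)) (s t : ℝ) :
    1 ≤ ‖natParam b s + t • deriv (natParam b) s‖ := by
  have hd : Differentiable ℝ (natParam b) := hC1.differentiable one_ne_zero
  obtain ⟨g, hg1, hg2⟩ := exists_dual_vector ℝ (natParam b s)
    (by rw [← norm_ne_zero_iff, norm_natParam]; norm_num)
  have hgle : ∀ y : X, g y ≤ ‖y‖ := fun y =>
    (le_abs_self _).trans (by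
      calc |g y| = ‖g y‖ := rfl
        _ ≤ ‖g‖ * ‖y‖ := g.le_opNorm y
        _ = ‖y‖ := by rw [hg1, one_mul])
  have hgs : g (natParam b s) = 1 := by rw [hg2, norm_natParam]; norm_num
  have hmax : IsLocalMax (fun u => g (natParam b u)) s :=
    Filter.Eventually.of_forall fun u => by
      calc g (natParam b u) ≤ ‖natParam b u‖ := hgle _
        _ = 1 := norm_natParam b u
        _ = g (natParam b s) := hgs.symm
  have hder : HasDerivAt (fun u => g (natParam b u)) (g (deriv (natParam b) s)) s :=
    g.hasFDerivAt.comp_hasDerivAt s (hd s).hasDerivAt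
  have hzero : g (deriv (natParam b) s) = 0 := hmax.hasDerivAt_eq_zero hder
  calc (1:ℝ) = g (natParam b s + t • deriv (natParam b) s) := by
        rw [map_add, _root_.map_smul, smul_eq_mul, hzero, hgs]; ring
    _ ≤ ‖natParam b s + t • deriv (natParam b) s‖ := hgle _
/-- Bounds on the radial and tangential supercurvatures `P`, `T`. -/
theorem supercurvature_bounds [CompleteSpace X] (b : Module.Basis (Fin 2) ℝ X)
    (hC1 : ContDiff ℝ 1 (natParam b))
    (φ P T : ℝ → ℝ)
    (hφ : ∀ s : ℝ, φ s ∈ Set.Ioo s (s + 2 * halfLen b) ∧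
      deriv (natParam b) s = natParam b (φ s))
    (hPT : ∀ s : ℝ, deriv (natParam b) (φ s) =
      (-(P s)) • natParam b s + T s • deriv (natParam b) s)
    (s : ℝ) :
    |T s| ≤ ((CConst b + cConst b) * CConst b / (cConst b)^2) * |P s| ∧
    (cConst b)^2 / ((CConst b)^2 + CConst b * cConst b + (cConst b)^2) ≤ |P s| := by
  have hc := cConst_pos b
  have hcC := cConst_le_CConst b
  have hC : 0 < CConst b := lt_of_lt_of_le hc hcC
  have hna : ‖natParam b s‖ = 1 := norm_natParam b s
  have hnb : ‖deriv (natParam b) s‖ = 1 := by rw [(hφ s).2]; exact norm_natParam b (φ s)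
  have hnd : ‖deriv (natParam b) (φ s)‖ = 1 := by
    rw [(hφ (φ s)).2]; exact norm_natParam b (φ (φ s))
  set A := detB b (natParam b s) (deriv (natParam b) s) with hAdef
  have hAlow : 1 ≤ (CConst b)^2 * |A| :=
    detB_lower b (fun t => support_line b hC1 s t) hnb
  have hsup2 : ∀ t : ℝ, 1 ≤ ‖deriv (natParam b) s + t • deriv (natParam b) (φ s)‖ := by
    intro t; rw [(hφ s).2]; exact support_line b hC1 (φ s) t
  have hBlow : 1 ≤ (CConst b)^2 * |detB b (deriv (natParam b) s) (deriv (natParam b) (φ s))| :=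
    detB_lower b hsup2 hnd
  have hAup : (cConst b)^2 * |A| ≤ 1 := detB_upper b hna hnb
  have hTup : (cConst b)^2 * |detB b (natParam b s) (deriv (natParam b) (φ s))| ≤ 1 :=
    detB_upper b hna hnd
  have hTA : detB b (natParam b s) (deriv (natParam b) (φ s)) = T s * A := by
    rw [hPT s, hAdef]
    simp only [detB, map_add, _root_.map_smul, smul_eq_mul]
    ring
  have hPA : detB b (deriv (natParam b) s) (deriv (natParam b) (φ s)) = P s * A := by
    rw [hPT s, hAdef]
    simp only [detB, map_add, _root_.map_smul, smul_eq_mul]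
    ring
  have e1 : (cConst b)^2 * (|T s| * |A|) ≤ 1 := by rw [← abs_mul, ← hTA]; exact hTup
  have e2 : 1 ≤ (CConst b)^2 * (|P s| * |A|) := by rw [← abs_mul, ← hPA]; exact hBlow
  have hApos : 0 < |A| := by
    nlinarith [hAlow, sq_nonneg (CConst b), abs_nonneg A]
  constructor
  · rw [div_mul_eq_mul_div, le_div_iff₀ (pow_pos hc 2)]
    have e3 : ((cConst b)^2 * |T s|) * |A| ≤ ((CConst b + cConst b) * CConst b * |P s|) * |A| := by
      nlinarith [e1, e2, mul_nonneg (mul_nonneg hc.le hC.le)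
        (mul_nonneg (abs_nonneg (P s)) (abs_nonneg A))]
    have e4 := (mul_le_mul_iff_of_pos_right hApos).mp e3
    linarith [e4]
  · have hden : (0:ℝ) < (CConst b)^2 + CConst b * cConst b + (cConst b)^2 := by positivity
    rw [div_le_iff₀ hden]
    have f1 : (cConst b)^2 ≤ (cConst b)^2 * ((CConst b)^2 * (|P s| * |A|)) :=
      le_mul_of_one_le_right (by positivity) e2
    have f2 : (cConst b)^2 * ((CConst b)^2 * (|P s| * |A|))
        = ((CConst b)^2 * |P s|) * ((cConst b)^2 * |A|) := by ring
    have f3 : ((CConst b)^2 * |P s|) * ((cConst b)^2 * |A|) ≤ ((CConst b)^2 * |P s|) * 1 :=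
      mul_le_mul_of_nonneg_left hAup (by positivity)
    nlinarith [f1, f2 ▸ f1, f3, mul_nonneg (abs_nonneg (P s)) (mul_nonneg hC.le hc.le),
      mul_nonneg (abs_nonneg (P s)) (mul_pos hc hc).le]

end
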